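/- arXiv:1810.11700 — 3 statements merged into one kernel-verified Lean document; each statement's English description precedes it below -/
import Mathlib

section
/- Every graph that is a proper k-path contains a Hamiltonian path; consequently, every proper k-path with an even number of vertices contains a perfect matching. -/
open SimpleGraph

/-- A vertex `v` is simplicial in the subgraph of `G` induced by `s` if `v ∈ s`
and the neighborhood of `v` inside `s` induces a complete graph. -/
def IsSimplicialIn {V : Type*} (G : SimpleGraph V) (s : Set V) (v : V) : Prop :=
  v ∈ s ∧ ∀ u ∈ s, ∀ w ∈ s, G.Adj v u → G.Adj v w → u ≠ w → G.Adj u w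

/-- A vertex `v` is `k`-simplicial in the subgraph of `G` induced by `s` if `v ∈ s`
and the neighborhood of `v` inside `s` induces a complete graph on `k` vertices. -/
def IsKSimplicialIn {V : Type*} (G : SimpleGraph V) (s : Set V) (k : ℕ) (v : V) : Prop :=
  v ∈ s ∧ {u ∈ s | G.Adj v u}.ncard = k ∧
    ∀ u ∈ s, ∀ w ∈ s, G.Adj v u → G.Adj v w → u ≠ w → G.Adj u w

/-- Proper `k`-paths (as vertex sets `s` of induced subgraphs of an ambient graph
`G`), defined recursively: the complete graph on `k+1` vertices is a proper
`k`-path; a graph on more than `k+1` vertices is a proper `k`-path if it contains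
a `k`-simplicial vertex `v` whose removal results in a proper `k`-path having a
simplicial vertex in the neighborhood of `v`. -/
inductive IsProperKPath {V : Type*} (G : SimpleGraph V) (k : ℕ) : Set V → Prop
  | base (s : Set V) (hcard : s.ncard = k + 1)
      (hcomplete : ∀ u ∈ s, ∀ w ∈ s, u ≠ w → G.Adj u w) : IsProperKPath G k s
  | step (s : Set V) (v : V) (hv : v ∈ s) (hbig : k + 1 < s.ncard)
      (hksimp : IsKSimplicialIn G s k v)
      (hrec : IsProperKPath G k (s \ {v}))
      (hsimp : ∃ w ∈ s \ {v}, G.Adj v w ∧ IsSimplicialIn G (s \ {v}) w) :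
      IsProperKPath G k s

section Aux

variable {V : Type*} [DecidableEq V] {G : SimpleGraph V} {k : ℕ} {s : Set V}

lemma IsProperKPath.finite (h : IsProperKPath G k s) : s.Finite := by
  by_contra hinf
  have h0 : s.ncard = 0 := Set.Infinite.ncard hinf
  cases h with
  | base s hcard hcomplete => omega
  | step s v hv hbig hksimp hrec hsimp => omega

/-- Every vertex of a proper `k`-path has at least `k` neighbours. -/
lemma IsProperKPath.mindeg (h : IsProperKPath G k s) :
    ∀ x ∈ s, k ≤ {u ∈ s | G.Adj x u}.ncard := by
  induction h with
  | base s hcard hcomplete =>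
    intro x hx
    have hfin : s.Finite := (IsProperKPath.base s hcard hcomplete).finite
    have heq : {u ∈ s | G.Adj x u} = s \ {x} := by
      ext u
      constructor
      · rintro ⟨hu, hadj⟩
        exact ⟨hu, fun he => G.irrefl (by rwa [Set.mem_singleton_iff.mp he] at hadj)⟩
      · rintro ⟨hu, hne⟩
        exact ⟨hu, hcomplete x hx u hu (fun he => hne (by simp [← he]))⟩
    rw [heq, Set.ncard_diff_singleton_of_mem hx, hcard]
    omega
  | step s v hv hbig hksimp hrec hsimp ih =>
    intro x hx
    have hfin : s.Finite := (IsProperKPath.step s v hv hbig hksimp hrec hsimp).finite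
    rcases eq_or_ne x v with rfl | hxv
    · exact le_of_eq hksimp.2.1.symm
    · refine le_trans (ih x ⟨hx, hxv⟩) (Set.ncard_le_ncard ?_ (hfin.subset fun u hu => hu.1))
      rintro u ⟨hu, hadj⟩
      exact ⟨hu.1, hadj⟩

/-- A simplicial vertex of a proper `k`-path has at most `k` neighbours. -/
lemma IsProperKPath.simplicial_deg_le (h : IsProperKPath G k s) :
    ∀ w, IsSimplicialIn G s w → {u ∈ s | G.Adj w u}.ncard ≤ k := by
  induction h with
  | base s hcard hcomplete =>
    intro w hw
    have hfin : s.Finite := (IsProperKPath.base s hcard hcomplete).finite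
    have hsub : {u ∈ s | G.Adj w u} ⊆ s \ {w} := by
      rintro u ⟨hu, hadj⟩
      exact ⟨hu, fun he => G.irrefl (by rwa [Set.mem_singleton_iff.mp he] at hadj)⟩
    calc {u ∈ s | G.Adj w u}.ncard ≤ (s \ {w}).ncard :=
          Set.ncard_le_ncard hsub (hfin.diff)
      _ ≤ k := by
          rw [Set.ncard_diff_singleton_of_mem hw.1, hcard]; omega
  | step s v hv hbig hksimp hrec hsimp ih =>
    intro w hw
    have hfin : s.Finite := (IsProperKPath.step s v hv hbig hksimp hrec hsimp).finite
    rcases eq_or_ne w v with rfl | hwv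
    · exact le_of_eq hksimp.2.1
    · by_cases hadj : G.Adj w v
      · -- all neighbours of `w` other than `v` are neighbours of `v`
        have hNfin : {u ∈ s | G.Adj v u}.Finite := hfin.subset fun u hu => hu.1
        have hwNv : w ∈ {u ∈ s | G.Adj v u} := ⟨hw.1, hadj.symm⟩
        have hk1 : 1 ≤ k := by
          have h1 : ({u ∈ s | G.Adj v u}).Nonempty := ⟨w, hwNv⟩
          have h2 := Set.ncard_pos hNfin |>.mpr h1
          have h3 := hksimp.2.1
          omega
        have hsub : {u ∈ s | G.Adj w u} ⊆ insert v ({u ∈ s | G.Adj v u} \ {w}) := by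
          rintro u ⟨hu, hadju⟩
          rcases eq_or_ne u v with rfl | huv
          · exact Set.mem_insert _ _
          · refine Set.mem_insert_iff.mpr (Or.inr ⟨⟨hu, (hw.2 u hu v hv hadju hadj huv).symm⟩, ?_⟩)
            exact fun he => G.irrefl (by rwa [Set.mem_singleton_iff.mp he] at hadju)
        calc {u ∈ s | G.Adj w u}.ncard
            ≤ (insert v ({u ∈ s | G.Adj v u} \ {w})).ncard :=
              Set.ncard_le_ncard hsub ((hNfin.diff).insert v)
          _ ≤ ({u ∈ s | G.Adj v u} \ {w}).ncard + 1 := Set.ncard_insert_le _ _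
          _ = (k - 1) + 1 := by
              rw [Set.ncard_diff_singleton_of_mem hwNv, hksimp.2.1]
          _ = k := by omega
      · have heq : {u ∈ s | G.Adj w u} = {u ∈ s \ {v} | G.Adj w u} := by
          ext u
          constructor
          · rintro ⟨hu, hadju⟩
            refine ⟨⟨hu, fun he => hadj (by rwa [Set.mem_singleton_iff.mp he] at hadju)⟩, hadju⟩
          · rintro ⟨hu, hadju⟩
            exact ⟨hu.1, hadju⟩
        rw [heq]
        refine ih w ⟨⟨hw.1, hwv⟩, ?_⟩
        intro u hu w' hw' h1 h2 h3
        exact hw.2 u hu.1 w' hw'.1 h1 h2 h3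

/-- A simplicial vertex of `s = (s \ {v}) ∪ {v}` other than `v` is not adjacent to `v`. -/
lemma IsProperKPath.not_adj_simplicial (h : IsProperKPath G k s)
    (v : V) (hv : v ∈ s) (hrec : IsProperKPath G k (s \ {v}))
    {w : V} (hw : IsSimplicialIn G s w) (hwv : w ≠ v) : ¬ G.Adj v w := by
  intro hadj
  have hfin : s.Finite := h.finite
  have hdegle := h.simplicial_deg_le w hw
  have h1 : k ≤ {u ∈ s \ {v} | G.Adj w u}.ncard := hrec.mindeg w ⟨hw.1, hwv⟩
  have h2 : insert v {u ∈ s \ {v} | G.Adj w u} ⊆ {u ∈ s | G.Adj w u} := by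
    rintro u (rfl | ⟨hu, hadju⟩)
    · exact ⟨hv, hadj.symm⟩
    · exact ⟨hu.1, hadju⟩
  have h3 : v ∉ {u ∈ s \ {v} | G.Adj w u} := fun hc => hc.1.2 rfl
  have hfin' : ({u ∈ s \ {v} | G.Adj w u}).Finite := hfin.subset fun u hu => hu.1.1
  have h4 := Set.ncard_insert_of_notMem h3 hfin'
  have h5 : (insert v {u ∈ s \ {v} | G.Adj w u}).ncard ≤ {u ∈ s | G.Adj w u}.ncard :=
    Set.ncard_le_ncard h2 (hfin.subset fun u hu => hu.1)
  omega

lemma IsProperKPath.exists_simplicial (h : IsProperKPath G k s) :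
    ∃ w, IsSimplicialIn G s w := by
  cases h with
  | base s hcard hcomplete =>
    obtain ⟨w, hws⟩ := Set.nonempty_of_ncard_ne_zero (s := s) (by omega)
    exact ⟨w, hws, fun u hu w' hw' _ _ hne => hcomplete u hu w' hw' hne⟩
  | step s v hv hbig hksimp hrec hsimp =>
    exact ⟨v, hv, hksimp.2.2⟩

/-- Key counting fact used for inserting the new vertex: two distinct neighbours of
`w₀` in `s \ {v}` cannot both avoid the neighbourhood of `v`. -/
lemma two_nbrs {v w₀ : V} (hfin : s.Finite)
    (hksimp : IsKSimplicialIn G s k v)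
    (hrec : IsProperKPath G k (s \ {v}))
    (hw₀ : IsSimplicialIn G (s \ {v}) w₀) (hvw₀ : G.Adj v w₀)
    {p q : V} (hp : p ∈ s \ {v}) (hq : q ∈ s \ {v})
    (hpw : G.Adj w₀ p) (hqw : G.Adj w₀ q) (hpq : p ≠ q) :
    G.Adj v p ∨ G.Adj v q := by
  by_contra hcon
  push_neg at hcon
  have hNtle : {u ∈ s \ {v} | G.Adj w₀ u}.ncard ≤ k := hrec.simplicial_deg_le w₀ hw₀
  have hw₀Nv : w₀ ∈ {u ∈ s | G.Adj v u} := ⟨hw₀.1.1, hvw₀⟩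
  have hNvfin : ({u ∈ s | G.Adj v u}).Finite := hfin.subset fun u hu => hu.1
  have hsub : insert p (insert q ({u ∈ s | G.Adj v u} \ {w₀})) ⊆ {u ∈ s \ {v} | G.Adj w₀ u} := by
    rintro u (rfl | rfl | ⟨⟨hu, hadju⟩, hne⟩)
    · exact ⟨hp, hpw⟩
    · exact ⟨hq, hqw⟩
    · have hune : w₀ ≠ u := fun he => hne (by simp [← he])
      refine ⟨⟨hu, fun he => G.irrefl (by rwa [Set.mem_singleton_iff.mp he] at hadju)⟩, ?_⟩
      exact hksimp.2.2 w₀ hw₀.1.1 u hu hvw₀ hadju hune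
  have hq' : q ∉ insert q ({u ∈ s | G.Adj v u} \ {w₀}) → False := fun hc => hc (Set.mem_insert _ _)
  have hqmem : q ∉ {u ∈ s | G.Adj v u} \ {w₀} := fun hc => hcon.2 hc.1.2
  have hpmem : p ∉ insert q ({u ∈ s | G.Adj v u} \ {w₀}) := by
    rintro (rfl | hc)
    · exact hpq rfl
    · exact hcon.1 hc.1.2
  have e1 := Set.ncard_insert_of_notMem hqmem (hNvfin.diff)
  have e2 := Set.ncard_insert_of_notMem hpmem ((hNvfin.diff).insert q)
  have e3 : ({u ∈ s | G.Adj v u} \ {w₀}).ncard = k - 1 := by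
    rw [Set.ncard_diff_singleton_of_mem hw₀Nv, hksimp.2.1]
  have hk1 : 1 ≤ k := by
    have h6 := Set.ncard_pos hNvfin |>.mpr ⟨w₀, hw₀Nv⟩
    have h7 := hksimp.2.1
    omega
  have e4 : (insert p (insert q ({u ∈ s | G.Adj v u} \ {w₀}))).ncard ≤
      {u ∈ s \ {v} | G.Adj w₀ u}.ncard :=
    Set.ncard_le_ncard hsub (hfin.subset fun u hu => hu.1.1)
  omega

/-- Main lemma: a proper `k`-path has a hamiltonian list starting at any
prescribed simplicial vertex. -/
lemma IsProperKPath.hpat (h : IsProperKPath G k s) :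
    ∀ w, IsSimplicialIn G s w →
      ∃ P : List V, P.Nodup ∧ (∀ x, x ∈ P ↔ x ∈ s) ∧ P.Chain' G.Adj ∧ P.head? = some w := by
  induction h with
  | base s hcard hcomplete =>
    intro w hw
    have hfin : s.Finite := (IsProperKPath.base s hcard hcomplete).finite
    have hfin' : (s \ {w}).Finite := hfin.diff
    refine ⟨w :: hfin'.toFinset.toList, ?_, ?_, ?_, rfl⟩
    · refine List.nodup_cons.mpr ⟨?_, Finset.nodup_toList _⟩
      intro hc
      rw [Finset.mem_toList, Set.Finite.mem_toFinset] at hc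
      exact hc.2 rfl
    · intro x
      simp only [List.mem_cons, Finset.mem_toList, Set.Finite.mem_toFinset, Set.mem_diff,
        Set.mem_singleton_iff]
      constructor
      · rintro (rfl | hx)
        · exact hw.1
        · exact hx.1
      · intro hx
        rcases eq_or_ne x w with rfl | hne
        · exact Or.inl rfl
        · exact Or.inr ⟨hx, hne⟩
    · refine List.Pairwise.isChain ?_
      have hnd : (w :: hfin'.toFinset.toList).Nodup := by
        refine List.nodup_cons.mpr ⟨?_, Finset.nodup_toList _⟩
        intro hc
        rw [Finset.mem_toList, Set.Finite.mem_toFinset] at hc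
        exact hc.2 rfl
      have hmem : ∀ x ∈ (w :: hfin'.toFinset.toList), x ∈ s := by
        intro x hx
        rcases List.mem_cons.mp hx with rfl | hx'
        · exact hw.1
        · rw [Finset.mem_toList, Set.Finite.mem_toFinset] at hx'
          exact hx'.1
      exact List.Pairwise.imp_of_mem
        (fun ha hb hne => hcomplete _ (hmem _ ha) _ (hmem _ hb) hne) hnd
  | step s v hv hbig hksimp hrec hsimp ih =>
    intro w hw
    obtain ⟨w₀, hw₀mem, hvw₀, hw₀simp⟩ := hsimp
    have horig : IsProperKPath G k s :=
      IsProperKPath.step s v hv hbig hksimp hrec ⟨w₀, hw₀mem, hvw₀, hw₀simp⟩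
    have hfin : s.Finite := horig.finite
    rcases eq_or_ne w v with rfl | hwv
    · -- start at the newly added vertex `v`
      obtain ⟨P, hnd, hmem, hch, hhd⟩ := ih w₀ hw₀simp
      refine ⟨w :: P, ?_, ?_, ?_, rfl⟩
      · exact List.nodup_cons.mpr ⟨fun hc => ((hmem w).1 hc).2 rfl, hnd⟩
      · intro x
        simp only [List.mem_cons, hmem x, Set.mem_diff, Set.mem_singleton_iff]
        constructor
        · rintro (rfl | hx)
          · exact hv
          · exact hx.1
        · intro hx
          rcases eq_or_ne x w with rfl | hne
          · exact Or.inl rfl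
          · exact Or.inr ⟨hx, hne⟩
      · rw [List.Chain', List.isChain_cons]
        refine ⟨?_, hch⟩
        intro y hy
        rw [hhd, Option.mem_some_iff] at hy
        rw [← hy]
        exact hvw₀
    · -- start at an old simplicial vertex `w`; insert `v` next to `w₀`
      have hnadj : ¬ G.Adj v w := horig.not_adj_simplicial v hv hrec hw hwv
      have hwt : IsSimplicialIn G (s \ {v}) w :=
        ⟨⟨hw.1, hwv⟩, fun u hu w' hw' h1 h2 h3 => hw.2 u hu.1 w' hw'.1 h1 h2 h3⟩
      obtain ⟨P, hnd, hmem, hch, hhd⟩ := ih w hwt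
      have hvP : v ∉ P := fun hc => ((hmem v).1 hc).2 rfl
      have hww₀ : w ≠ w₀ := fun he => hnadj (he ▸ hvw₀)
      have hw₀P : w₀ ∈ P := (hmem w₀).2 hw₀mem
      obtain ⟨A, B, hAB⟩ := List.append_of_mem hw₀P
      have hAne : A ≠ [] := by
        rintro rfl
        rw [hAB] at hhd
        simp only [List.nil_append, List.head?_cons, Option.some.injEq] at hhd
        exact hww₀ hhd.symm
      rw [hAB] at hnd hmem hch hhd
      rw [List.Chain', List.isChain_append] at hch
      obtain ⟨hchA, hchB, hcompat⟩ := hch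
      set p := A.getLast hAne with hpdef
      have hpA : p ∈ A := List.getLast_mem hAne
      have hplast : A.getLast? = some p := List.getLast?_eq_getLast_of_ne_nil hAne
      have hpw₀ : G.Adj p w₀ := hcompat p (by rw [hplast]; rfl) w₀ rfl
      have hpP : p ∈ s \ {v} := (hmem p).1 (by rw [List.mem_append]; exact Or.inl hpA)
      have hheadA : ∀ C : List V, (A ++ C).head? = some w := by
        intro C
        rw [List.head?_append_of_ne_nil A hAne,
          ← List.head?_append_of_ne_nil A (l₂ := w₀ :: B) hAne, hhd]
      rw [List.nodup_append] at hnd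
      obtain ⟨hndA, hndB, hdisj⟩ := hnd
      have hmem' : ∀ (x : V) (C : List V),
          (∀ y, y ∈ C ↔ y = v ∨ y ∈ w₀ :: B) → (x ∈ A ++ C ↔ x ∈ s) := by
        intro x C hC
        rw [List.mem_append, hC]
        have := hmem x
        rw [List.mem_append] at this
        simp only [Set.mem_diff, Set.mem_singleton_iff] at this
        constructor
        · rintro (hx | rfl | hx)
          · exact (this.1 (Or.inl hx)).1
          · exact hv
          · exact (this.1 (Or.inr hx)).1
        · intro hx
          rcases eq_or_ne x v with rfl | hne
          · exact Or.inr (Or.inl rfl)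
          · rcases this.2 ⟨hx, hne⟩ with h1 | h1
            · exact Or.inl h1
            · exact Or.inr (Or.inr h1)
      by_cases hpNv : G.Adj v p
      · -- insert `v` just before `w₀`
        refine ⟨A ++ v :: w₀ :: B, ?_, ?_, ?_, hheadA _⟩
        · rw [List.nodup_append]
          refine ⟨hndA, ?_, ?_⟩
          · refine List.nodup_cons.mpr ⟨?_, hndB⟩
            intro hc
            exact hvP (by rw [hAB, List.mem_append]; exact Or.inr hc)
          · intro x hxA y hxC hxy; subst hxy
            rcases List.mem_cons.mp hxC with rfl | hxC'
            · exact hvP (by rw [hAB, List.mem_append]; exact Or.inl hxA)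
            · exact hdisj _ hxA _ hxC' rfl
        · intro x
          refine hmem' x _ (fun y => ?_)
          simp [List.mem_cons]
        · rw [List.Chain', List.isChain_append]
          refine ⟨hchA, ?_, ?_⟩
          · rw [List.isChain_cons_cons]
            exact ⟨hvw₀, hchB⟩
          · intro x hx y hy
            rw [hplast, Option.mem_some_iff] at hx
            rw [List.head?_cons, Option.mem_some_iff] at hy
            rw [← hx, ← hy]
            exact hpNv.symm
      · cases hB : B with
        | nil =>
          -- `w₀` is last; append `v`
          refine ⟨A ++ [w₀, v], ?_, ?_, ?_, hheadA _⟩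
          · rw [List.nodup_append]
            subst hB
            refine ⟨hndA, ?_, ?_⟩
            · refine List.nodup_cons.mpr ⟨?_, by simp⟩
              simp only [List.mem_singleton]
              exact fun he => hw₀mem.2 (by simp [he])
            · intro x hxA y hxC hxy; subst hxy
              rcases List.mem_cons.mp hxC with rfl | hxC'
              · exact hdisj _ hxA _ (List.mem_singleton_self _) rfl
              · rcases List.mem_singleton.mp hxC' with rfl
                exact hvP (by rw [hAB, List.mem_append]; exact Or.inl hxA)
          · intro x
            subst hB
            refine hmem' x _ (fun y => ?_)
            simp [List.mem_cons, or_comm]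
          · rw [List.Chain', List.isChain_append]
            refine ⟨hchA, ?_, ?_⟩
            · rw [List.isChain_cons_cons]
              exact ⟨hvw₀.symm, List.isChain_singleton v⟩
            · intro x hx y hy
              rw [hplast, Option.mem_some_iff] at hx
              rw [List.head?_cons, Option.mem_some_iff] at hy
              rw [← hx, ← hy]
              exact hpw₀
        | cons q B' =>
          -- `v` fits between `w₀` and its successor `q`
          subst hB
          have hchB' := List.isChain_cons_cons.mp hchB
          have hqP : q ∈ s \ {v} :=
            (hmem q).1 (by rw [List.mem_append]; exact Or.inr (by simp))
          have hpq : p ≠ q := by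
            intro he
            refine hdisj _ hpA _ ?_ rfl
            rw [he]
            exact List.mem_cons_of_mem _ (List.mem_cons_self)
          have hqNv : G.Adj v q := by
            rcases two_nbrs hfin hksimp hrec hw₀simp hvw₀ hpP hqP hpw₀.symm hchB'.1 hpq with h1 | h1
            · exact absurd h1 hpNv
            · exact h1
          refine ⟨A ++ w₀ :: v :: q :: B', ?_, ?_, ?_, hheadA _⟩
          · rw [List.nodup_append]
            refine ⟨hndA, ?_, ?_⟩
            · have hvnB : v ∉ w₀ :: q :: B' := fun hc =>
                hvP (by rw [hAB, List.mem_append]; exact Or.inr hc)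
              rw [List.nodup_cons] at hndB ⊢
              refine ⟨?_, ?_⟩
              · intro hc
                rcases List.mem_cons.mp hc with rfl | hc'
                · exact hvnB (List.mem_cons_self)
                · exact hndB.1 hc'
              · rw [List.nodup_cons]
                refine ⟨fun hc => hvnB (List.mem_cons_of_mem _ hc), hndB.2⟩
            · intro x hxA y hxC hxy; subst hxy
              have hxv : x ≠ v := fun he =>
                hvP (by rw [hAB, List.mem_append]; exact Or.inl (he ▸ hxA))
              have : x ∈ w₀ :: q :: B' := by
                rcases List.mem_cons.mp hxC with rfl | hc
                · exact List.mem_cons_self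
                · rcases List.mem_cons.mp hc with rfl | hc'
                  · exact absurd rfl hxv
                  · exact List.mem_cons_of_mem _ hc'
              exact hdisj _ hxA _ this rfl
          · intro x
            refine hmem' x _ (fun y => ?_)
            simp only [List.mem_cons]
            tauto
          · rw [List.Chain', List.isChain_append]
            refine ⟨hchA, ?_, ?_⟩
            · rw [List.isChain_cons_cons, List.isChain_cons_cons]
              exact ⟨hvw₀.symm, hqNv, hchB'.2⟩
            · intro x hx y hy
              rw [hplast, Option.mem_some_iff] at hx
              rw [List.head?_cons, Option.mem_some_iff] at hy
              rw [← hx, ← hy]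
              exact hpw₀

end Aux

section Plumbing

variable {α : Type*}

lemma exists_walk_of_chain (H : SimpleGraph α) :
    ∀ (l : List α), l ≠ [] → l.Chain' H.Adj →
      ∃ (a b : α) (p : H.Walk a b), p.support = l
  | [], h, _ => absurd rfl h
  | [x], _, _ => ⟨x, x, SimpleGraph.Walk.nil, rfl⟩
  | x :: y :: r, _, hc => by
      obtain ⟨a, b, p, hp⟩ :=
        exists_walk_of_chain H (y :: r) (by simp) (List.IsChain.tail hc)
      have hxy : H.Adj x y := (List.isChain_cons_cons.mp hc).1
      have hay : y = a := by
        have h2 := p.support_eq_cons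
        rw [hp] at h2
        exact (List.cons.injEq _ _ _ _ ▸ h2).1
      subst hay
      exact ⟨x, b, SimpleGraph.Walk.cons hxy p, by simp [hp]⟩

lemma exists_matching_of_chain (H : SimpleGraph α) :
    ∀ (l : List α), l.Chain' H.Adj → l.Nodup → Even l.length →
      ∃ M : H.Subgraph, M.verts = {x | x ∈ l} ∧ M.IsMatching
  | [], _, _, _ => ⟨⊥, by simp, fun v hv => absurd hv (by simp)⟩
  | [x], _, _, he => by simp at he
  | x :: y :: r, hc, hn, he => by
      obtain ⟨M, hMv, hM⟩ := exists_matching_of_chain H r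
        ((List.IsChain.tail hc).tail)
        ((List.nodup_cons.mp ((List.nodup_cons.mp hn).2)).2)
        (by
          simp only [List.length_cons] at he
          rw [Nat.even_add_one, Nat.even_add_one, not_not] at he
          exact he)
      have hxy : H.Adj x y := (List.isChain_cons_cons.mp hc).1
      refine ⟨H.subgraphOfAdj hxy ⊔ M, ?_, ?_⟩
      · rw [SimpleGraph.Subgraph.verts_sup, hMv, SimpleGraph.subgraphOfAdj_verts]
        ext z
        simp only [Set.mem_union, Set.mem_insert_iff, Set.mem_singleton_iff, Set.mem_setOf_eq,
          List.mem_cons]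
        tauto
      · refine (SimpleGraph.Subgraph.IsMatching.subgraphOfAdj hxy).sup hM ?_
        have hsup : M.support ⊆ {z | z ∈ r} := hMv ▸ M.support_subset_verts
        have hsup2 : (H.subgraphOfAdj hxy).support ⊆ {x, y} := by
          rw [SimpleGraph.support_subgraphOfAdj]
        refine Set.disjoint_left.mpr ?_
        intro z hz hz'
        have hzr : z ∈ r := hsup hz'
        rcases hsup2 hz with rfl | rfl
        · exact (List.nodup_cons.mp hn).1 (List.mem_cons_of_mem _ hzr)
        · exact (List.nodup_cons.mp ((List.nodup_cons.mp hn).2)).1 hzr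

end Plumbing

theorem stmt8 {V : Type*} [DecidableEq V] (G : SimpleGraph V) (k : ℕ) (s : Set V)
    (h : IsProperKPath G k s) :
    (∃ (u w : s) (p : (G.induce s).Walk u w), p.IsHamiltonian) ∧
    (Even s.ncard → ∃ M : (G.induce s).Subgraph, M.IsPerfectMatching) := by
  classical
  obtain ⟨w, hw⟩ := h.exists_simplicial
  obtain ⟨P, hnd, hmem, hch, hhd⟩ := h.hpat w hw
  have hPmem : ∀ x ∈ P, x ∈ s := fun x hx => (hmem x).1 hx
  set Q : List ↥s := P.pmap (fun x hx => (⟨x, hx⟩ : ↥s)) hPmem with hQ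
  have hQmap : Q.map Subtype.val = P := by
    simp [hQ, List.map_pmap]
  have hQnd : Q.Nodup := by
    refine List.Nodup.pmap ?_ hnd
    intro a ha b hb hab
    exact congrArg Subtype.val hab
  have hQch : Q.Chain' (G.induce s).Adj := by
    have h1 : (Q.map Subtype.val).Chain' G.Adj := by rw [hQmap]; exact hch
    rw [List.Chain', List.isChain_map] at h1
    exact h1.imp (fun a b hab => hab)
  have hQmemAll : ∀ a : ↥s, a ∈ Q := by
    intro a
    rw [hQ, List.mem_pmap]
    exact ⟨a.val, (hmem _).2 a.2, rfl⟩
  have hQne : Q ≠ [] := by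
    intro h0
    have := hQmemAll ⟨w, hw.1⟩
    rw [h0] at this
    exact absurd this List.not_mem_nil
  obtain ⟨a, b, p, hsupp⟩ := exists_walk_of_chain (G.induce s) Q hQne hQch
  have hham : p.IsHamiltonian := by
    intro c
    rw [hsupp]
    exact @List.count_eq_one_of_mem _ instBEqOfDecidableEq _ _ _ hQnd (hQmemAll c)
  refine ⟨⟨a, b, p, hham⟩, ?_⟩
  intro heven
  have hlenP : P.length = s.ncard := by
    have hseq : s = {x | x ∈ P} := by
      ext x
      exact (hmem x).symm
    rw [hseq, ← List.coe_toFinset, Set.ncard_coe_finset, List.toFinset_card_of_nodup hnd]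
  have hlen : Even Q.length := by
    rw [hQ, List.length_pmap, hlenP]
    exact heven
  obtain ⟨M, hMv, hM⟩ := exists_matching_of_chain (G.induce s) Q hQch hQnd hlen
  refine ⟨M, hM, fun a => ?_⟩
  rw [hMv]
  exact hQmemAll a
end

section
/- Let G be a graph on an even number n of vertices with pathwidth pw(G) ≤ k for some k ≥ 1. Then there exists a partition M of V(G) into pairs such that the multigraph G+M, obtained by adding an edge between the two vertices of each pair of M, satisfies pw(G+M) ≤ k+1. -/
open SimpleGraph

/-- `X : Fin n → Finset V` is a path decomposition of `G`: every vertex is in some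
bag, every edge has both endpoints in a common bag, and the bags containing any
fixed vertex form a contiguous interval. -/
def IsPathDecomp {V : Type*} (G : SimpleGraph V) (n : ℕ) (X : Fin n → Finset V) : Prop :=
  (∀ v : V, ∃ i, v ∈ X i) ∧
  (∀ u v : V, G.Adj u v → ∃ i, u ∈ X i ∧ v ∈ X i) ∧
  (∀ i j l : Fin n, i ≤ j → j ≤ l → ∀ v : V, v ∈ X i → v ∈ X l → v ∈ X j)

/-- The pathwidth of `G` is at most `k`: there is a path decomposition all of whose
bags have at most `k+1` vertices. -/
def pwLE {V : Type*} (G : SimpleGraph V) (k : ℕ) : Prop :=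
  ∃ (n : ℕ) (X : Fin n → Finset V), IsPathDecomp G n X ∧ ∀ i, (X i).card ≤ k + 1

theorem stmt9 {V : Type*} [Fintype V] [DecidableEq V] (G : SimpleGraph V)
    (k : ℕ) (hk : 1 ≤ k) (heven : Even (Fintype.card V)) (hpw : pwLE G k) :
    ∃ M : Finset (Sym2 V),
      (∀ e ∈ M, ¬ e.IsDiag) ∧
      (∀ v : V, ∃! e, e ∈ M ∧ v ∈ e) ∧
      pwLE (G ⊔ SimpleGraph.fromEdgeSet ↑M) (k + 1) := by
  classical
  obtain ⟨n, X, ⟨hX1, hX2, hX3⟩, hXcard⟩ := hpw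
  set N := Fintype.card V with hNdef
  have hNeven : N % 2 = 0 := Nat.even_iff.mp heven
  -- the last bag containing a vertex
  have hne : ∀ v : V, (Finset.univ.filter (fun i : Fin n => v ∈ X i)).Nonempty := by
    intro v; obtain ⟨i, hi⟩ := hX1 v; exact ⟨i, by simp [hi]⟩
  set b : V → Fin n :=
    fun v => (Finset.univ.filter (fun i : Fin n => v ∈ X i)).max' (hne v) with hbdef
  have hb_mem : ∀ v, v ∈ X (b v) := by
    intro v
    have h := (Finset.univ.filter (fun i : Fin n => v ∈ X i)).max'_mem (hne v)
    simpa using h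
  have hb_le : ∀ v (j : Fin n), v ∈ X j → j ≤ b v := by
    intro v j h; exact Finset.le_max' _ _ (by simpa using h)
  -- an injective key, monotone in b
  set eqv : V ≃ Fin N := Fintype.equivFin V with heqvdef
  set key : V → ℕ := fun v => (b v : ℕ) * (N + 1) + (eqv v : ℕ) with hkeydef
  have heqvlt : ∀ v : V, (eqv v : ℕ) < N + 1 := fun v => Nat.lt_succ_of_lt (eqv v).isLt
  have hkeymod : ∀ u : V, key u % (N + 1) = (eqv u : ℕ) := by
    intro u
    show ((b u : ℕ) * (N + 1) + (eqv u : ℕ)) % (N + 1) = (eqv u : ℕ)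
    rw [Nat.add_comm, Nat.add_mul_mod_self_right, Nat.mod_eq_of_lt (heqvlt u)]
  have hkey_inj : Function.Injective key := by
    intro v w h
    have hmm : (eqv v : ℕ) = (eqv w : ℕ) := by
      rw [← hkeymod v, ← hkeymod w, h]
    exact eqv.injective (Fin.ext hmm)
  have hkey_mono : ∀ v w, key v ≤ key w → (b v : ℕ) ≤ (b w : ℕ) := by
    intro v w h
    by_contra hlt
    push_neg at hlt
    have hcalc : key w < key v := by
      calc key w = (b w : ℕ) * (N + 1) + (eqv w : ℕ) := rfl
        _ < (b w : ℕ) * (N + 1) + (N + 1) := by have := heqvlt w; omega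
        _ = ((b w : ℕ) + 1) * (N + 1) := by ring
        _ ≤ (b v : ℕ) * (N + 1) := Nat.mul_le_mul_right _ (by omega)
        _ ≤ key v := Nat.le_add_right _ _
    omega
  -- a listing of the vertices sorted by b
  set s : Finset ℕ := Finset.univ.image key with hsdef
  have hscard : s.card = N := by
    rw [hsdef, Finset.card_image_of_injective _ hkey_inj, Finset.card_univ]
  set oi := s.orderIsoOfFin hscard with hoidef
  have hσex : ∀ i : Fin N, ∃ v : V, key v = (oi i : ℕ) := by
    intro i
    have h : ((oi i : s) : ℕ) ∈ s := (oi i).2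
    obtain ⟨v, _, hv⟩ := Finset.mem_image.mp h
    exact ⟨v, hv⟩
  choose σ hσkey using hσex
  have hσinj : Function.Injective σ := by
    intro i j h
    have h2 : (oi i : ℕ) = (oi j : ℕ) := by rw [← hσkey i, ← hσkey j, h]
    exact oi.injective (Subtype.ext h2)
  have hσbij : Function.Bijective σ :=
    (Fintype.bijective_iff_injective_and_card σ).mpr ⟨hσinj, by simp [hNdef]⟩
  have hσmono : ∀ i j : Fin N, i ≤ j → b (σ i) ≤ b (σ j) := by
    intro i j hij
    have h1 : (oi i : ℕ) ≤ (oi j : ℕ) := Subtype.coe_le_coe.mpr (oi.le_iff_le.mpr hij)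
    have h2 : key (σ i) ≤ key (σ j) := by rw [hσkey i, hσkey j]; exact h1
    exact hkey_mono _ _ h2
  set ord : Fin N ≃ V := Equiv.ofBijective σ hσbij with horddef
  have hsymmσ : ∀ i : Fin N, ord.symm (σ i) = i := fun i => ord.symm_apply_apply i
  have hσsymm : ∀ v : V, σ (ord.symm v) = v := fun v => ord.apply_symm_apply v
  -- the pairing function
  have hplt : ∀ i : Fin N, (if (i : ℕ) % 2 = 0 then (i : ℕ) + 1 else (i : ℕ) - 1) < N := by
    intro i
    have := i.isLt
    split_ifs with h <;> omega
  set p : Fin N → Fin N := fun i => ⟨_, hplt i⟩ with hpdef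
  have hpval : ∀ i : Fin N, (p i : ℕ) = if (i : ℕ) % 2 = 0 then (i : ℕ) + 1 else (i : ℕ) - 1 :=
    fun i => rfl
  have hpp : ∀ i, p (p i) = i := by
    intro i
    apply Fin.ext
    simp only [hpval]
    have := i.isLt
    split_ifs <;> omega
  have hpne : ∀ i, p i ≠ i := by
    intro i h
    have h2 : (p i : ℕ) = (i : ℕ) := congrArg Fin.val h
    rw [hpval] at h2
    split_ifs at h2 <;> omega
  -- the matching
  set M : Finset (Sym2 V) := Finset.univ.image (fun i : Fin N => s(σ i, σ (p i))) with hMdef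
  have hMmem : ∀ e ∈ M, ∃ i : Fin N, e = s(σ i, σ (p i)) := by
    intro e he
    rw [hMdef, Finset.mem_image] at he
    obtain ⟨i, _, hi⟩ := he
    exact ⟨i, hi.symm⟩
  refine ⟨M, ?_, ?_, ?_⟩
  · -- no diagonal edges
    intro e he
    obtain ⟨i, rfl⟩ := hMmem e he
    rw [Sym2.mk_isDiag_iff]
    intro h
    exact hpne i (hσinj h).symm
  · -- perfect matching
    intro v
    refine ⟨s(v, σ (p (ord.symm v))), ⟨?_, Sym2.mem_mk_left _ _⟩, ?_⟩
    · rw [hMdef, Finset.mem_image]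
      exact ⟨ord.symm v, Finset.mem_univ _, by rw [hσsymm v]⟩
    · rintro e ⟨heM, hve⟩
      obtain ⟨i, rfl⟩ := hMmem e heM
      rw [Sym2.mem_iff] at hve
      rcases hve with hv | hv
      · rw [hv, hsymmσ]
      · rw [hv, hsymmσ, hpp]
        exact Sym2.eq_swap
  · -- pathwidth bound
    set Ext : Fin n → Finset V := fun j =>
      Finset.univ.filter (fun v =>
        (ord.symm v : ℕ) % 2 = 0 ∧ b v < j ∧ j ≤ b (σ (p (ord.symm v)))) with hExtdef
    set Y : Fin n → Finset V := fun j => X j ∪ Ext j with hYdef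
    have hExtmem : ∀ (j : Fin n) (v : V), v ∈ Ext j ↔
        (ord.symm v : ℕ) % 2 = 0 ∧ b v < j ∧ j ≤ b (σ (p (ord.symm v))) := by
      intro j v
      rw [hExtdef]
      simp
    -- at most one extended vertex per bag
    have hExthelp : ∀ (j : Fin n) (u w : V), u ∈ Ext j → w ∈ Ext j →
        (ord.symm u : ℕ) ≤ (ord.symm w : ℕ) → u = w := by
      intro j u w hu hw hle
      rw [hExtmem] at hu hw
      obtain ⟨hpu, hbu, hju⟩ := hu
      obtain ⟨hpw2, hbw, hjw⟩ := hw
      rcases eq_or_lt_of_le hle with heq | hlt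
      · have : ord.symm u = ord.symm w := Fin.ext heq
        have := congrArg ord this
        simpa using this
      · exfalso
        have h1 : (p (ord.symm u) : ℕ) ≤ (ord.symm w : ℕ) := by
          rw [hpval, if_pos hpu]; omega
        have h2 : b (σ (p (ord.symm u))) ≤ b (σ (ord.symm w)) := hσmono _ _ h1
        rw [hσsymm w] at h2
        exact absurd (lt_of_le_of_lt (hju.trans h2) hbw) (lt_irrefl j)
    have hExtcard : ∀ j, (Ext j).card ≤ 1 := by
      intro j
      rw [Finset.card_le_one]
      intro u hu w hw
      rcases le_total ((ord.symm u : ℕ)) ((ord.symm w : ℕ)) with h | h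
      · exact hExthelp j u w hu hw h
      · exact (hExthelp j w u hw hu h).symm
    -- matching edges are covered
    have hpairbag : ∀ i : Fin N, (i : ℕ) % 2 = 0 →
        σ i ∈ Y (b (σ (p i))) ∧ σ (p i) ∈ Y (b (σ (p i))) := by
      intro i hi
      have hile : i ≤ p i := by
        rw [Fin.le_def, hpval, if_pos hi]; omega
      have hble : b (σ i) ≤ b (σ (p i)) := hσmono _ _ hile
      constructor
      · rcases eq_or_lt_of_le hble with heq | hlt
        · rw [hYdef]
          exact Finset.mem_union_left _ (heq ▸ hb_mem (σ i))
        · rw [hYdef]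
          refine Finset.mem_union_right _ ?_
          rw [hExtmem]
          refine ⟨?_, ?_, ?_⟩
          · rw [hsymmσ]; exact hi
          · exact hlt
          · rw [hsymmσ]

      · rw [hYdef]
        exact Finset.mem_union_left _ (hb_mem (σ (p i)))
    refine ⟨n, Y, ⟨?_, ?_, ?_⟩, ?_⟩
    · intro v
      obtain ⟨i, hi⟩ := hX1 v
      exact ⟨i, Finset.mem_union_left _ hi⟩
    · intro u v huv
      rw [sup_adj] at huv
      rcases huv with hG | hM
      · obtain ⟨i, hi1, hi2⟩ := hX2 u v hG
        exact ⟨i, Finset.mem_union_left _ hi1, Finset.mem_union_left _ hi2⟩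
      · rw [fromEdgeSet_adj] at hM
        obtain ⟨hmem, hne'⟩ := hM
        rw [Finset.mem_coe] at hmem
        obtain ⟨i, hei⟩ := hMmem _ hmem
        -- reduce to the even-index case
        have hpair : ∃ i0 : Fin N, (i0 : ℕ) % 2 = 0 ∧
            (s(u, v) = s(σ i0, σ (p i0)) ∨ s(u, v) = s(σ (p i0), σ i0)) := by
          rcases Nat.even_or_odd (i : ℕ) with he | ho
          · exact ⟨i, Nat.even_iff.mp he, Or.inl hei⟩
          · refine ⟨p i, ?_, Or.inr ?_⟩
            · have ho2 := Nat.odd_iff.mp ho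
              rw [hpval, if_neg (by omega)]
              omega
            · rw [hpp]; exact hei
        obtain ⟨i0, hi0, hcase⟩ := hpair
        obtain ⟨hu0, hv0⟩ := hpairbag i0 hi0
        rcases hcase with hc | hc
        · rw [Sym2.eq_iff] at hc
          rcases hc with ⟨rfl, rfl⟩ | ⟨rfl, rfl⟩
          · exact ⟨_, hu0, hv0⟩
          · exact ⟨_, hv0, hu0⟩
        · rw [Sym2.eq_iff] at hc
          rcases hc with ⟨rfl, rfl⟩ | ⟨rfl, rfl⟩
          · exact ⟨_, hv0, hu0⟩
          · exact ⟨_, hu0, hv0⟩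
    · intro i j l hij hjl v hvi hvl
      rw [hYdef, Finset.mem_union] at hvi hvl ⊢
      rcases hvi with hXi | hEi <;> rcases hvl with hXl | hEl
      · exact Or.inl (hX3 i j l hij hjl v hXi hXl)
      · rw [hExtmem] at hEl
        obtain ⟨hpar, hbl, hlle⟩ := hEl
        rcases le_or_gt j (b v) with hle | hlt
        · exact Or.inl (hX3 i j (b v) hij hle v hXi (hb_mem v))
        · exact Or.inr ((hExtmem j v).mpr ⟨hpar, hlt, hjl.trans hlle⟩)
      · rw [hExtmem] at hEi
        exact absurd (lt_of_lt_of_le hEi.2.1 (hij.trans (hjl.trans (hb_le v l hXl))))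
          (lt_irrefl (b v))
      · rw [hExtmem] at hEi hEl
        exact Or.inr ((hExtmem j v).mpr
          ⟨hEi.1, lt_of_lt_of_le hEi.2.1 hij, hjl.trans hEl.2.2⟩)
    · intro j
      calc (Y j).card ≤ (X j).card + (Ext j).card := Finset.card_union_le _ _
        _ ≤ (k + 1) + 1 := Nat.add_le_add (hXcard j) (hExtcard j)
end

section
/- Let G be obtained from the disjoint union of a graph G₀ and, for each pair {u,v} in a partition of V(G₀) into pairs, a gadget Q_r (with identifications as in the construction), and suppose all added edges receive a new color λ' with c(λ',λ) = 0 for every color λ. Then G has an r-factor of reload cost 0 if and only if G₀ has a 2-factor of reload cost 0. -/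
open SimpleGraph Finset

/-- The reload cost of an edge-colored graph `H` with edge-coloring `χ` and
symmetric color-traversal cost `c`. -/
noncomputable def reloadCost {V X : Type*} [Fintype V] [DecidableEq V]
    (H : SimpleGraph V) (χ : Sym2 V → X) (c : X → X → ℕ)
    (hc : ∀ x y, c x y = c y x) : ℕ := by
  classical
  exact ∑ v : V,
    ∑ p ∈ (H.incidenceFinset v).sym2.filter (fun p => ¬ p.IsDiag),
      Sym2.lift ⟨fun e f => c (χ e) (χ f), fun e f => hc (χ e) (χ f)⟩ p

/-- The graph `G'` obtained from `G₀` by choosing a partition of `V(G₀)` into pairs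
`{a i, b i}` (indexed by `i : I`) and, for each pair, adding a copy of the gadget
`Q_r` (obtained from `K_{r+1}` by subdividing `r-2` edges twice and removing the
middle edges), identifying `r-2` of its degree-1 vertices with `a i` and the other
`r-2` with `b i`. -/
def Gprime {V I : Type*} (G : SimpleGraph V) (r : ℕ) (a b : I → V) :
    SimpleGraph (V ⊕ (I × Fin (r + 1))) :=
  SimpleGraph.fromRel (fun x y =>
    match x, y with
    | Sum.inl u, Sum.inl v => G.Adj u v
    | Sum.inr (i, x), Sum.inr (j, y) =>
        i = j ∧ x ≠ y ∧ ¬(y.val = x.val + 1 ∧ x.val < r - 2) ∧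
          ¬(x.val = y.val + 1 ∧ y.val < r - 2)
    | Sum.inl u, Sum.inr (i, x) =>
        (u = a i ∧ x.val < r - 2) ∨ (u = b i ∧ 1 ≤ x.val ∧ x.val ≤ r - 2)
    | _, _ => False)

open scoped Classical in
lemma reloadCost_eq_zero_iff {V X : Type*} [Fintype V] [DecidableEq V]
    (H : SimpleGraph V) (χ : Sym2 V → X) (c : X → X → ℕ)
    (hc : ∀ x y, c x y = c y x) :
    reloadCost H χ c hc = 0 ↔
      ∀ v : V, ∀ e ∈ H.incidenceFinset v, ∀ f ∈ H.incidenceFinset v,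
        e ≠ f → c (χ e) (χ f) = 0 := by
  classical
  unfold reloadCost
  rw [Finset.sum_eq_zero_iff]
  constructor
  · intro h v e he f hf hef
    have hm : s(e, f) ∈ (H.incidenceFinset v).sym2.filter (fun p => ¬ p.IsDiag) := by
      simp only [Finset.mem_filter, Finset.mk_mem_sym2_iff, Sym2.mk_isDiag_iff]
      exact ⟨⟨he, hf⟩, hef⟩
    have := (Finset.sum_eq_zero_iff.mp (h v (Finset.mem_univ v))) _ hm
    simpa using this
  · intro h v _
    rw [Finset.sum_eq_zero_iff]
    intro p hp
    induction p using Sym2.ind with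
    | _ e f =>
      simp only [Finset.mem_filter, Finset.mk_mem_sym2_iff, Sym2.mk_isDiag_iff] at hp
      simpa using h v e hp.1.1 f hp.1.2 hp.2

section adj

variable {V I : Type*} {G : SimpleGraph V} {r : ℕ} {a b : I → V}

lemma Gprime_adj_inl_inl {u v : V} :
    (Gprime G r a b).Adj (Sum.inl u) (Sum.inl v) ↔ G.Adj u v := by
  simp only [Gprime, SimpleGraph.fromRel_adj]
  constructor
  · rintro ⟨-, h | h⟩
    · exact h
    · exact h.symm
  · intro h
    exact ⟨by simp [G.ne_of_adj h], Or.inl h⟩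

lemma Gprime_adj_inl_inr {u : V} {i : I} {x : Fin (r + 1)} :
    (Gprime G r a b).Adj (Sum.inl u) (Sum.inr (i, x)) ↔
      ((u = a i ∧ x.val < r - 2) ∨ (u = b i ∧ 1 ≤ x.val ∧ x.val ≤ r - 2)) := by
  simp only [Gprime, SimpleGraph.fromRel_adj]
  constructor
  · rintro ⟨-, h | h⟩
    · exact h
    · exact h.elim
  · intro h
    exact ⟨by simp, Or.inl h⟩

lemma Gprime_adj_inr_inr {i j : I} {x y : Fin (r + 1)} :
    (Gprime G r a b).Adj (Sum.inr (i, x)) (Sum.inr (j, y)) ↔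
      (i = j ∧ x ≠ y ∧ ¬(y.val = x.val + 1 ∧ x.val < r - 2) ∧
        ¬(x.val = y.val + 1 ∧ y.val < r - 2)) := by
  simp only [Gprime, SimpleGraph.fromRel_adj]
  constructor
  · rintro ⟨-, h | h⟩
    · exact h
    · obtain ⟨h1, h2, h3, h4⟩ := h
      exact ⟨h1.symm, h2.symm, h4, h3⟩
  · rintro ⟨h1, h2, h3, h4⟩
    exact ⟨by simp [h2], Or.inl ⟨h1, h2, h3, h4⟩⟩

lemma Gprime_adj_inr_inl {u : V} {i : I} {x : Fin (r + 1)} :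
    (Gprime G r a b).Adj (Sum.inr (i, x)) (Sum.inl u) ↔
      ((u = a i ∧ x.val < r - 2) ∨ (u = b i ∧ 1 ≤ x.val ∧ x.val ≤ r - 2)) := by
  rw [SimpleGraph.adj_comm]; exact Gprime_adj_inl_inr

end adj

section counting

lemma ncard_sum_split {α β : Type*} (S : Set (α ⊕ β)) (hS : S.Finite) :
    S.ncard = (Sum.inl ⁻¹' S).ncard + (Sum.inr ⁻¹' S).ncard := by
  have hdecomp : S = Sum.inl '' (Sum.inl ⁻¹' S) ∪ Sum.inr '' (Sum.inr ⁻¹' S) := by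
    ext x
    cases x <;> simp
  have hdisj : Disjoint (Sum.inl '' (Sum.inl ⁻¹' S)) (Sum.inr '' (Sum.inr ⁻¹' S)) := by
    rw [Set.disjoint_left]
    rintro x ⟨u, -, rfl⟩ ⟨w, -, h⟩
    exact Sum.inl_ne_inr h.symm
  have h1 : (Sum.inl '' (Sum.inl ⁻¹' S) : Set (α ⊕ β)).Finite :=
    hS.subset (Set.image_preimage_subset _ _)
  have h2 : (Sum.inr '' (Sum.inr ⁻¹' S) : Set (α ⊕ β)).Finite :=
    hS.subset (Set.image_preimage_subset _ _)
  conv_lhs => rw [hdecomp]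
  rw [Set.ncard_union_eq hdisj h1 h2,
    Set.ncard_image_of_injective _ Sum.inl_injective,
    Set.ncard_image_of_injective _ Sum.inr_injective]

lemma ncard_fiber {α β : Type*} (i : α) (P : β → Prop) :
    {p : α × β | p.1 = i ∧ P p.2}.ncard = {z : β | P z}.ncard := by
  have : {p : α × β | p.1 = i ∧ P p.2} = (fun z => (i, z)) '' {z : β | P z} := by
    ext ⟨j, z⟩
    simp [and_comm, eq_comm]
  rw [this, Set.ncard_image_of_injective]
  intro x y h
  simpa using h

lemma ncard_compl_fin {n : ℕ} (F : Set (Fin n)) :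
    Fᶜ.ncard = n - F.ncard := by
  have := Set.ncard_add_ncard_compl F
  simp only [Nat.card_eq_fintype_card, Fintype.card_fin] at this
  omega

lemma ncard_fin_lt (n k : ℕ) (hk : k ≤ n) :
    {z : Fin (n + 1) | z.val < k}.ncard = k := by
  have : {z : Fin (n + 1) | z.val < k} =
      (fun j : Fin k => (⟨j.val, by omega⟩ : Fin (n + 1))) '' Set.univ := by
    ext z
    simp only [Set.mem_setOf_eq, Set.image_univ, Set.mem_range]
    constructor
    · intro h; exact ⟨⟨z.val, h⟩, by simp⟩
    · rintro ⟨j, rfl⟩; exact j.isLt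
  rw [this, Set.ncard_image_of_injective, Set.ncard_univ]
  · simp
  · intro x y h
    have : x.val = y.val := by simpa [Fin.ext_iff] using h
    exact Fin.ext this

lemma ncard_fin_between (n k : ℕ) (hk : k ≤ n) :
    {z : Fin (n + 1) | 1 ≤ z.val ∧ z.val ≤ k}.ncard = k := by
  have : {z : Fin (n + 1) | 1 ≤ z.val ∧ z.val ≤ k} =
      (fun j : Fin k => (⟨j.val + 1, by omega⟩ : Fin (n + 1))) '' Set.univ := by
    ext z
    simp only [Set.mem_setOf_eq, Set.image_univ, Set.mem_range]
    constructor
    · rintro ⟨h1, h2⟩; exact ⟨⟨z.val - 1, by omega⟩, Fin.ext (by simp; omega)⟩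
    · rintro ⟨j, rfl⟩; simp
  rw [this, Set.ncard_image_of_injective, Set.ncard_univ]
  · simp
  · intro x y h
    have : x.val = y.val := by simpa [Fin.ext_iff] using h
    exact Fin.ext this

end counting

section gadgetdeg

variable {V I : Type*} [Fintype V] [Fintype I] {G : SimpleGraph V} {r : ℕ} {a b : I → V}

lemma gadget_degree (hr : 2 ≤ r) (i : I) (hab : a i ≠ b i) (y : Fin (r + 1)) :
    ((Gprime G r a b).neighborSet (Sum.inr (i, y))).ncard = r := by
  classical
  set k := r - 2 with hk
  rw [ncard_sum_split _ (Set.toFinite _)]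
  have hA : Sum.inl ⁻¹' ((Gprime G r a b).neighborSet (Sum.inr (i, y))) =
      {u : V | (u = a i ∧ y.val < k) ∨ (u = b i ∧ 1 ≤ y.val ∧ y.val ≤ k)} := by
    ext u
    simp only [Set.mem_preimage, SimpleGraph.mem_neighborSet, Set.mem_setOf_eq]
    rw [SimpleGraph.adj_comm, Gprime_adj_inl_inr]
  have hB : Sum.inr ⁻¹' ((Gprime G r a b).neighborSet (Sum.inr (i, y))) =
      {p : I × Fin (r + 1) | p.1 = i ∧ (p.2 ≠ y ∧ ¬(p.2.val = y.val + 1 ∧ y.val < k) ∧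
        ¬(y.val = p.2.val + 1 ∧ p.2.val < k))} := by
    ext ⟨j, z⟩
    simp only [Set.mem_preimage, SimpleGraph.mem_neighborSet, Set.mem_setOf_eq]
    rw [Gprime_adj_inr_inr]
    constructor
    · rintro ⟨h1, h2, h3, h4⟩
      exact ⟨h1.symm, h2.symm, h3, h4⟩
    · rintro ⟨h1, h2, h3, h4⟩
      exact ⟨h1.symm, h2.symm, h3, h4⟩
  rw [hA, hB, ncard_fiber i (fun z : Fin (r + 1) => z ≠ y ∧
    ¬(z.val = y.val + 1 ∧ y.val < k) ∧ ¬(y.val = z.val + 1 ∧ z.val < k))]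
  -- four cases
  by_cases hlt : y.val < k
  · by_cases h1 : 1 ≤ y.val
    · -- case III : 1 ≤ y < k
      have hAcard : {u : V | (u = a i ∧ y.val < k) ∨
          (u = b i ∧ 1 ≤ y.val ∧ y.val ≤ k)}.ncard = 2 := by
        have : {u : V | (u = a i ∧ y.val < k) ∨ (u = b i ∧ 1 ≤ y.val ∧ y.val ≤ k)}
            = {a i, b i} := by
          ext u; simp [hlt, h1, le_of_lt hlt]
        rw [this, Set.ncard_pair hab]
      have hZ : {z : Fin (r + 1) | z ≠ y ∧ ¬(z.val = y.val + 1 ∧ y.val < k) ∧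
          ¬(y.val = z.val + 1 ∧ z.val < k)} =
          ({y, ⟨y.val + 1, by omega⟩, ⟨y.val - 1, by omega⟩} : Set (Fin (r + 1)))ᶜ := by
        ext z
        simp only [Set.mem_setOf_eq, Set.mem_compl_iff, Set.mem_insert_iff,
          Set.mem_singleton_iff, Fin.ext_iff, not_or]
        omega
      rw [hAcard, hZ, ncard_compl_fin]
      have h3 : ({y, ⟨y.val + 1, by omega⟩, ⟨y.val - 1, by omega⟩} :
          Set (Fin (r + 1))).ncard = 3 := by
        rw [Set.ncard_insert_of_notMem (by simp only [Set.mem_insert_iff, Set.mem_singleton_iff, Fin.ext_iff, not_or]; omega)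
          (Set.toFinite _), Set.ncard_pair (by simp only [ne_eq, Fin.ext_iff]; omega)]
      rw [h3]
      omega
    · -- case II : y = 0 < k
      have hy0 : y.val = 0 := by omega
      have hAcard : {u : V | (u = a i ∧ y.val < k) ∨
          (u = b i ∧ 1 ≤ y.val ∧ y.val ≤ k)}.ncard = 1 := by
        have : {u : V | (u = a i ∧ y.val < k) ∨ (u = b i ∧ 1 ≤ y.val ∧ y.val ≤ k)}
            = {a i} := by
          ext u; simp [hy0, show 0 < k by omega]
        rw [this, Set.ncard_singleton]
      have hZ : {z : Fin (r + 1) | z ≠ y ∧ ¬(z.val = y.val + 1 ∧ y.val < k) ∧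
          ¬(y.val = z.val + 1 ∧ z.val < k)} =
          ({y, ⟨y.val + 1, by omega⟩} : Set (Fin (r + 1)))ᶜ := by
        ext z
        simp only [Set.mem_setOf_eq, Set.mem_compl_iff, Set.mem_insert_iff,
          Set.mem_singleton_iff, Fin.ext_iff, not_or]
        omega
      rw [hAcard, hZ, ncard_compl_fin, Set.ncard_pair (by simp only [ne_eq, Fin.ext_iff]; omega)]
      omega
  · by_cases h1 : 1 ≤ y.val ∧ y.val ≤ k
    · -- case IV : y = k ≥ 1
      have hyk : y.val = k := by omega
      have hAcard : {u : V | (u = a i ∧ y.val < k) ∨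
          (u = b i ∧ 1 ≤ y.val ∧ y.val ≤ k)}.ncard = 1 := by
        have : {u : V | (u = a i ∧ y.val < k) ∨ (u = b i ∧ 1 ≤ y.val ∧ y.val ≤ k)}
            = {b i} := by
          ext u; simp [hlt, h1.1, h1.2]
        rw [this, Set.ncard_singleton]
      have hZ : {z : Fin (r + 1) | z ≠ y ∧ ¬(z.val = y.val + 1 ∧ y.val < k) ∧
          ¬(y.val = z.val + 1 ∧ z.val < k)} =
          ({y, ⟨y.val - 1, by omega⟩} : Set (Fin (r + 1)))ᶜ := by
        ext z
        simp only [Set.mem_setOf_eq, Set.mem_compl_iff, Set.mem_insert_iff,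
          Set.mem_singleton_iff, Fin.ext_iff, not_or]
        omega
      rw [hAcard, hZ, ncard_compl_fin, Set.ncard_pair (by simp only [ne_eq, Fin.ext_iff]; omega)]
      omega
    · -- case I : y > k or (y = 0 and k = 0)
      have hAcard : {u : V | (u = a i ∧ y.val < k) ∨
          (u = b i ∧ 1 ≤ y.val ∧ y.val ≤ k)}.ncard = 0 := by
        have : {u : V | (u = a i ∧ y.val < k) ∨ (u = b i ∧ 1 ≤ y.val ∧ y.val ≤ k)}
            = ∅ := by
          ext u; simp only [Set.mem_setOf_eq, Set.mem_empty_iff_false, iff_false]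
          rintro (⟨-, h⟩ | ⟨-, h2, h3⟩)
          · exact hlt h
          · exact h1 ⟨h2, h3⟩
        rw [this, Set.ncard_empty]
      have hZ : {z : Fin (r + 1) | z ≠ y ∧ ¬(z.val = y.val + 1 ∧ y.val < k) ∧
          ¬(y.val = z.val + 1 ∧ z.val < k)} =
          ({y} : Set (Fin (r + 1)))ᶜ := by
        ext z
        simp only [Set.mem_setOf_eq, Set.mem_compl_iff, Set.mem_insert_iff,
          Set.mem_singleton_iff, Fin.ext_iff, not_or]
        omega
      rw [hAcard, hZ, ncard_compl_fin, Set.ncard_singleton]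
      omega

end gadgetdeg

open scoped Classical in
lemma mem_incidenceFinset' {V : Type*} [Fintype V] [DecidableEq V]
    {G : SimpleGraph V} {v : V} {e : Sym2 V} :
    e ∈ G.incidenceFinset v ↔ ∃ u, G.Adj v u ∧ e = s(v, u) := by
  rw [SimpleGraph.mem_incidenceFinset]
  constructor
  · rintro ⟨he, hv⟩
    obtain ⟨u, rfl⟩ := Sym2.mem_iff_exists.mp hv
    exact ⟨u, (SimpleGraph.mem_edgeSet G).mp he, rfl⟩
  · rintro ⟨u, h, rfl⟩
    exact ⟨(SimpleGraph.mem_edgeSet G).mpr h, Sym2.mem_mk_left _ _⟩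

section cost

variable {V I X : Type*} [Fintype V] [DecidableEq V] [Fintype I] [DecidableEq I] {r : ℕ}
  (H : SimpleGraph V) (H' : SimpleGraph (V ⊕ (I × Fin (r + 1))))
  (χ₀ : Sym2 V → X) (c₀ : X → X → ℕ) (hc₀ : ∀ x y, c₀ x y = c₀ y x)
  (χ' : Sym2 (V ⊕ (I × Fin (r + 1))) → Option X)
  (c' : Option X → Option X → ℕ) (hc' : ∀ x y, c' x y = c' y x)

lemma cost_transfer_down
    (hχold : ∀ u v : V, χ' s(Sum.inl u, Sum.inl v) = some (χ₀ s(u, v)))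
    (hc'old : ∀ x y : X, c' (some x) (some y) = c₀ x y)
    (hadj : ∀ u w : V, H.Adj u w → H'.Adj (Sum.inl u) (Sum.inl w))
    (h0 : reloadCost H' χ' c' hc' = 0) :
    reloadCost H χ₀ c₀ hc₀ = 0 := by
  classical
  rw [reloadCost_eq_zero_iff] at h0 ⊢
  intro v e he f hf hef
  obtain ⟨u, hu, rfl⟩ := mem_incidenceFinset'.mp he
  obtain ⟨w, hw, rfl⟩ := mem_incidenceFinset'.mp hf
  have huw : u ≠ w := fun h => hef (by rw [h])
  have he' : s(Sum.inl v, Sum.inl u) ∈ H'.incidenceFinset (Sum.inl v) :=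
    mem_incidenceFinset'.mpr ⟨Sum.inl u, hadj v u hu, rfl⟩
  have hf' : s(Sum.inl v, Sum.inl w) ∈ H'.incidenceFinset (Sum.inl v) :=
    mem_incidenceFinset'.mpr ⟨Sum.inl w, hadj v w hw, rfl⟩
  have hne : s(Sum.inl v, Sum.inl u) ≠ (s(Sum.inl v, Sum.inl w) :
      Sym2 (V ⊕ (I × Fin (r + 1)))) := by
    intro h
    rcases Sym2.eq_iff.mp h with ⟨-, h2⟩ | ⟨h1, h2⟩
    · exact huw (Sum.inl_injective h2)
    · exact huw ((Sum.inl_injective h2).trans (Sum.inl_injective h1))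
  have := h0 (Sum.inl v) _ he' _ hf' hne
  rw [hχold, hχold, hc'old] at this
  exact this

lemma cost_transfer_up
    (hχold : ∀ u v : V, χ' s(Sum.inl u, Sum.inl v) = some (χ₀ s(u, v)))
    (hχnew : ∀ e : Sym2 (V ⊕ (I × Fin (r + 1))),
      (¬ ∃ u v : V, e = s(Sum.inl u, Sum.inl v)) → χ' e = none)
    (hc'old : ∀ x y : X, c' (some x) (some y) = c₀ x y)
    (hc'new : ∀ x : Option X, c' none x = 0)
    (hadj : ∀ u w : V, H'.Adj (Sum.inl u) (Sum.inl w) → H.Adj u w)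
    (h0 : reloadCost H χ₀ c₀ hc₀ = 0) :
    reloadCost H' χ' c' hc' = 0 := by
  classical
  rw [reloadCost_eq_zero_iff] at h0 ⊢
  intro x e he f hf hef
  by_cases hee : ∃ u v : V, e = s(Sum.inl u, Sum.inl v)
  · by_cases hff : ∃ u v : V, f = s(Sum.inl u, Sum.inl v)
    · -- both old edges; x must be inl
      obtain ⟨u1, hu1, rfl⟩ := mem_incidenceFinset'.mp he
      obtain ⟨u2, hu2, rfl⟩ := mem_incidenceFinset'.mp hf
      obtain ⟨w1, w2, hw⟩ := hee
      have hxinl : ∃ v : V, x = Sum.inl v := by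
        have : x ∈ (s(Sum.inl w1, Sum.inl w2) : Sym2 (V ⊕ (I × Fin (r + 1)))) := by
          rw [← hw]; exact Sym2.mem_mk_left _ _
        rw [Sym2.mem_iff] at this
        rcases this with h | h
        · exact ⟨w1, h⟩
        · exact ⟨w2, h⟩
      obtain ⟨v, rfl⟩ := hxinl
      have hu1' : ∃ z : V, u1 = Sum.inl z := by
        have : u1 ∈ (s(Sum.inl w1, Sum.inl w2) : Sym2 (V ⊕ (I × Fin (r + 1)))) := by
          rw [← hw]; exact Sym2.mem_mk_right _ _
        rw [Sym2.mem_iff] at this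
        rcases this with h | h
        · exact ⟨w1, h⟩
        · exact ⟨w2, h⟩
      obtain ⟨z1, rfl⟩ := hu1'
      obtain ⟨w1', w2', hw'⟩ := hff
      have hu2' : ∃ z : V, u2 = Sum.inl z := by
        have : u2 ∈ (s(Sum.inl w1', Sum.inl w2') : Sym2 (V ⊕ (I × Fin (r + 1)))) := by
          rw [← hw']; exact Sym2.mem_mk_right _ _
        rw [Sym2.mem_iff] at this
        rcases this with h | h
        · exact ⟨w1', h⟩
        · exact ⟨w2', h⟩
      obtain ⟨z2, rfl⟩ := hu2'
      have hz12 : z1 ≠ z2 := by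
        rintro rfl; exact hef rfl
      have hE : s(v, z1) ∈ H.incidenceFinset v :=
        mem_incidenceFinset'.mpr ⟨z1, hadj _ _ hu1, rfl⟩
      have hF : s(v, z2) ∈ H.incidenceFinset v :=
        mem_incidenceFinset'.mpr ⟨z2, hadj _ _ hu2, rfl⟩
      have hneEF : s(v, z1) ≠ s(v, z2) := by
        intro h
        rcases Sym2.eq_iff.mp h with ⟨-, h2⟩ | ⟨h1, h2⟩
        · exact hz12 h2
        · exact hz12 (h2.trans h1)
      have := h0 v _ hE _ hF hneEF
      rw [hχold, hχold, hc'old]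
      exact this
    · rw [hχnew f hff, hc' _ none, hc'new]
  · rw [hχnew e hee, hc'new]

end cost

section pv

variable {V I : Type*} [Fintype V] [Fintype I]

lemma Pv_ncard {r : ℕ} (hr : 2 ≤ r) (a b : I → V) (hab : ∀ i, a i ≠ b i)
    (hpart : ∀ v : V, ∃! i, v = a i ∨ v = b i) (v : V) :
    {p : I × Fin (r + 1) | (v = a p.1 ∧ p.2.val < r - 2) ∨
      (v = b p.1 ∧ 1 ≤ p.2.val ∧ p.2.val ≤ r - 2)}.ncard = r - 2 := by
  obtain ⟨i₀, hi₀, huniq⟩ := hpart v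
  rcases hi₀ with hva | hvb
  · have hset : {p : I × Fin (r + 1) | (v = a p.1 ∧ p.2.val < r - 2) ∨
        (v = b p.1 ∧ 1 ≤ p.2.val ∧ p.2.val ≤ r - 2)} =
        {p : I × Fin (r + 1) | p.1 = i₀ ∧ p.2.val < r - 2} := by
      ext ⟨j, x⟩
      simp only [Set.mem_setOf_eq]
      constructor
      · rintro (⟨h1, h2⟩ | ⟨h1, h2, h3⟩)
        · exact ⟨(huniq j (Or.inl h1)).symm ▸ rfl, h2⟩
        · exact absurd (((huniq j (Or.inr h1)) ▸ h1).symm.trans hva).symm (hab i₀)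
      · rintro ⟨rfl, h2⟩
        exact Or.inl ⟨hva, h2⟩
    rw [hset, ncard_fiber i₀ (fun x : Fin (r + 1) => x.val < r - 2),
      ncard_fin_lt r (r - 2) (by omega)]
  · have hset : {p : I × Fin (r + 1) | (v = a p.1 ∧ p.2.val < r - 2) ∨
        (v = b p.1 ∧ 1 ≤ p.2.val ∧ p.2.val ≤ r - 2)} =
        {p : I × Fin (r + 1) | p.1 = i₀ ∧ (1 ≤ p.2.val ∧ p.2.val ≤ r - 2)} := by
      ext ⟨j, x⟩
      simp only [Set.mem_setOf_eq]
      constructor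
      · rintro (⟨h1, h2⟩ | ⟨h1, h2, h3⟩)
        · exact absurd (((huniq j (Or.inl h1)) ▸ h1).symm.trans hvb).symm (hab i₀).symm
        · exact ⟨(huniq j (Or.inr h1)).symm ▸ rfl, h2, h3⟩
      · rintro ⟨rfl, h2, h3⟩
        exact Or.inr ⟨hvb, h2, h3⟩
    rw [hset, ncard_fiber i₀ (fun x : Fin (r + 1) => 1 ≤ x.val ∧ x.val ≤ r - 2),
      ncard_fin_between r (r - 2) (by omega)]

end pv

lemma Gprime_mono {V I : Type*} {G₁ G₂ : SimpleGraph V} {r : ℕ} {a b : I → V}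
    (h : G₁ ≤ G₂) : Gprime G₁ r a b ≤ Gprime G₂ r a b := by
  intro x y hxy
  match x, y with
  | Sum.inl u, Sum.inl w => exact Gprime_adj_inl_inl.mpr (h (Gprime_adj_inl_inl.mp hxy))
  | Sum.inl u, Sum.inr (i, z) => exact Gprime_adj_inl_inr.mpr (Gprime_adj_inl_inr.mp hxy)
  | Sum.inr (i, z), Sum.inl u => exact Gprime_adj_inr_inl.mpr (Gprime_adj_inr_inl.mp hxy)
  | Sum.inr (i, z), Sum.inr (j, w) => exact Gprime_adj_inr_inr.mpr (Gprime_adj_inr_inr.mp hxy)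

theorem stmt18 {V I X : Type*} [Fintype V] [DecidableEq V] [Fintype I] [DecidableEq I]
    (G₀ : SimpleGraph V) (r : ℕ) (hr : 2 ≤ r)
    (heven : Even (Fintype.card V))
    (hΔ : ∀ u : V, (G₀.neighborSet u).ncard ≤ 4)
    -- the pairing of `V(G₀)`
    (a b : I → V) (hab : ∀ i, a i ≠ b i) (hpart : ∀ v : V, ∃! i, v = a i ∨ v = b i)
    -- edge coloring and costs of `G₀`, with costs in `{0,1}`
    (χ₀ : Sym2 V → X) (c₀ : X → X → ℕ) (hc₀ : ∀ x y, c₀ x y = c₀ y x)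
    (hc₀01 : ∀ x y, c₀ x y ≤ 1)
    -- the coloring of `G'`: old edges keep their color, all gadget edges get the
    -- fresh color `none` (the new color `λ'`)
    (χ' : Sym2 (V ⊕ (I × Fin (r + 1))) → Option X)
    (hχold : ∀ u v : V, χ' s(Sum.inl u, Sum.inl v) = some (χ₀ s(u, v)))
    (hχnew : ∀ e : Sym2 (V ⊕ (I × Fin (r + 1))),
      (¬ ∃ u v : V, e = s(Sum.inl u, Sum.inl v)) → χ' e = none)
    -- the cost function of `G'`: it extends `c₀`, and the new color `none` has
    -- traversal cost `0` with every color
    (c' : Option X → Option X → ℕ) (hc' : ∀ x y, c' x y = c' y x)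
    (hc'old : ∀ x y : X, c' (some x) (some y) = c₀ x y)
    (hc'new : ∀ x : Option X, c' none x = 0) :
    -- `G'` has an `r`-factor of reload cost `0` iff `G₀` has a `2`-factor of
    -- reload cost `0`
    (∃ H' : SimpleGraph (V ⊕ (I × Fin (r + 1))), H' ≤ Gprime G₀ r a b ∧
      (∀ x, (H'.neighborSet x).ncard = r) ∧ reloadCost H' χ' c' hc' = 0) ↔
    (∃ H : SimpleGraph V, H ≤ G₀ ∧
      (∀ v, (H.neighborSet v).ncard = 2) ∧ reloadCost H χ₀ c₀ hc₀ = 0) := by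
  classical
  constructor
  · rintro ⟨H', hle, hdeg, hcost⟩
    have hforce : ∀ q : I × Fin (r + 1),
        H'.neighborSet (Sum.inr q) = (Gprime G₀ r a b).neighborSet (Sum.inr q) := by
      rintro ⟨i, y⟩
      refine Set.eq_of_subset_of_ncard_le (fun x hx => hle hx) ?_ (Set.toFinite _)
      rw [gadget_degree hr i (hab i) y, hdeg]
    refine ⟨⟨fun u w => H'.Adj (Sum.inl u) (Sum.inl w), ⟨fun u w h => h.symm⟩,
      ⟨fun u h => H'.loopless.irrefl _ h⟩⟩, fun u w h => Gprime_adj_inl_inl.mp (hle h), ?_, ?_⟩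
    · intro v
      have hsplit := ncard_sum_split (H'.neighborSet (Sum.inl v)) (Set.toFinite _)
      have hinr : Sum.inr ⁻¹' H'.neighborSet (Sum.inl v) =
          {p : I × Fin (r + 1) | (v = a p.1 ∧ p.2.val < r - 2) ∨
            (v = b p.1 ∧ 1 ≤ p.2.val ∧ p.2.val ≤ r - 2)} := by
        ext ⟨i, x⟩
        simp only [Set.mem_preimage, SimpleGraph.mem_neighborSet, Set.mem_setOf_eq]
        constructor
        · intro h
          exact Gprime_adj_inl_inr.mp (hle h)
        · intro h
          have hG : (Gprime G₀ r a b).Adj (Sum.inr (i, x)) (Sum.inl v) :=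
            Gprime_adj_inr_inl.mpr h
          have : Sum.inl v ∈ H'.neighborSet (Sum.inr (i, x)) := by
            rw [hforce]; exact hG
          exact this.symm
      have hPv := Pv_ncard hr a b hab hpart v
      rw [hdeg (Sum.inl v)] at hsplit
      rw [hinr, hPv] at hsplit
      have hinl : Sum.inl ⁻¹' H'.neighborSet (Sum.inl v) =
          {u : V | H'.Adj (Sum.inl v) (Sum.inl u)} := rfl
      rw [hinl] at hsplit
      have : ({u : V | H'.Adj (Sum.inl v) (Sum.inl u)}).ncard = 2 := by omega
      exact this
    · exact cost_transfer_down _ H' χ₀ c₀ hc₀ χ' c' hc' hχold hc'old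
        (fun u w h => h) hcost
  · rintro ⟨H, hle, hdeg, hcost⟩
    refine ⟨Gprime H r a b, Gprime_mono hle, ?_, ?_⟩
    · rintro (v | ⟨i, y⟩)
      · have hsplit := ncard_sum_split ((Gprime H r a b).neighborSet (Sum.inl v))
          (Set.toFinite _)
        have hinl : Sum.inl ⁻¹' (Gprime H r a b).neighborSet (Sum.inl v) =
            H.neighborSet v := by
          ext u
          simp only [Set.mem_preimage, SimpleGraph.mem_neighborSet]
          exact Gprime_adj_inl_inl
        have hinr : Sum.inr ⁻¹' (Gprime H r a b).neighborSet (Sum.inl v) =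
            {p : I × Fin (r + 1) | (v = a p.1 ∧ p.2.val < r - 2) ∨
              (v = b p.1 ∧ 1 ≤ p.2.val ∧ p.2.val ≤ r - 2)} := by
          ext ⟨i, x⟩
          simp only [Set.mem_preimage, SimpleGraph.mem_neighborSet, Set.mem_setOf_eq]
          exact Gprime_adj_inl_inr
        rw [hinl, hinr, hdeg v, Pv_ncard hr a b hab hpart v] at hsplit
        rw [hsplit]
        omega
      · exact gadget_degree hr i (hab i) y
    · exact cost_transfer_up H (Gprime H r a b) χ₀ c₀ hc₀ χ' c' hc' hχold hχnew
        hc'old hc'new (fun u w h => Gprime_adj_inl_inl.mp h) hcost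
end
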